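/- Let U_1,...,U_M : (0,∞) → ℝ satisfy the standing assumptions and fix c > 0. If w_1 and w_2 are distinct points of the simplex Σ^M, then the optimal allocations (π^m(w_1,c))_{m=1}^M and (π^m(w_2,c))_{m=1}^M are distinct vectors in c·Σ^M. -/

import Mathlib

open Finset

/-- Standing assumptions on a utility function `U` with derivative `U'`:
strictly increasing, strictly concave, continuously differentiable on `(0,∞)`,
satisfying the Inada conditions. -/
def StandingAssumptions (U U' : ℝ → ℝ) : Prop :=
  StrictMonoOn U (Set.Ioi (0 : ℝ)) ∧ StrictConcaveOn ℝ (Set.Ioi (0 : ℝ)) U ∧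
  (∀ c : ℝ, 0 < c → HasDerivAt U (U' c) c) ∧ ContinuousOn U' (Set.Ioi (0 : ℝ)) ∧
  Filter.Tendsto U' Filter.atTop (nhds 0) ∧
  Filter.Tendsto U' (nhdsWithin 0 (Set.Ioi (0 : ℝ))) Filter.atTop

lemma SA.slope_lt {U U' : ℝ → ℝ} (h : StandingAssumptions U U') {x y : ℝ}
    (hx : 0 < x) (hxy : x < y) : U y - U x < U' x * (y - x) := by
  have := h.2.1.slope_lt_of_hasDerivAt (Set.mem_Ioi.2 hx) (Set.mem_Ioi.2 (hx.trans hxy))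
    hxy (h.2.2.1 x hx)
  rw [slope_def_field] at this
  have h0 : 0 < y - x := by linarith
  calc U y - U x = (U y - U x) / (y - x) * (y - x) := by field_simp
    _ < U' x * (y - x) := by exact mul_lt_mul_of_pos_right this h0

lemma SA.lt_slope {U U' : ℝ → ℝ} (h : StandingAssumptions U U') {x y : ℝ}
    (hx : 0 < x) (hxy : x < y) : U' y * (y - x) < U y - U x := by
  have := h.2.1.lt_slope_of_hasDerivAt (Set.mem_Ioi.2 hx) (Set.mem_Ioi.2 (hx.trans hxy))
    hxy (h.2.2.1 y (hx.trans hxy))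
  rw [slope_def_field] at this
  have h0 : 0 < y - x := by linarith
  calc U' y * (y - x) < (U y - U x) / (y - x) * (y - x) := mul_lt_mul_of_pos_right this h0
    _ = U y - U x := by field_simp

lemma SA.anti {U U' : ℝ → ℝ} (h : StandingAssumptions U U') {x y : ℝ}
    (hx : 0 < x) (hxy : x < y) : U' y < U' x := by
  have h1 := SA.lt_slope h hx hxy
  have h2 := SA.slope_lt h hx hxy
  have h0 : 0 < y - x := by linarith
  nlinarith

lemma SA.pos {U U' : ℝ → ℝ} (h : StandingAssumptions U U') {x : ℝ} (hx : 0 < x) :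
    0 < U' x := by
  have h1 : U' (x + 1) < U' x := SA.anti h hx (by linarith)
  have h2 : (0:ℝ) ≤ U' (x + 1) := by
    refine le_of_tendsto h.2.2.2.2.1 ?_
    filter_upwards [Filter.eventually_ge_atTop (x + 2)] with z hz
    exact (SA.anti h (by linarith) (by linarith)).le
  linarith

section
variable {M : ℕ}

lemma sum_pair_diff {m k : Fin M} (hmk : m ≠ k) (f g : Fin M → ℝ)
    (h : ∀ j, j ≠ m → j ≠ k → f j = g j) :
    ∑ j, f j = ∑ j, g j + ((f m - g m) + (f k - g k)) := by
  have h2 : ∑ j, (f j - g j) = (f m - g m) + (f k - g k) := by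
    rw [← Finset.sum_pair (f := fun j => f j - g j) hmk]
    refine (Finset.sum_subset (Finset.subset_univ _) ?_).symm
    intro j _ hj
    simp only [Finset.mem_insert, Finset.mem_singleton, not_or] at hj
    rw [h j hj.1 hj.2]; ring
  have h3 : ∑ j, (f j - g j) = ∑ j, f j - ∑ j, g j := Finset.sum_sub_distrib f g
  linarith

end

section
variable {M : ℕ} {U U' : Fin M → ℝ → ℝ}

lemma claimA
    (hU : ∀ m, StandingAssumptions (U m) (U' m))
    (hU0 : ∀ m, ∀ c : ℝ, 0 < c → U m 0 ≤ U m c)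
    {c : ℝ} (hc : 0 < c) {w : Fin M → ℝ} (hw : w ∈ stdSimplex ℝ (Fin M))
    {p : Fin M → ℝ}
    (hppos : ∀ m, 0 ≤ p m) (hpsum : ∑ m, p m = c)
    (hpopt : ∀ q : Fin M → ℝ, (∀ m, 0 ≤ q m) → (∑ m, q m = c) →
      ∑ m, w m * U m (q m) ≤ ∑ m, w m * U m (p m))
    {m : Fin M} (hwm : 0 < w m) : 0 < p m := by
  by_contra hpm
  have hpm0 : p m = 0 := le_antisymm (not_lt.mp hpm) (hppos m)
  -- find k with p k > 0
  obtain ⟨k, hk⟩ : ∃ k, 0 < p k := by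
    by_contra hall
    push_neg at hall
    have : ∑ j, p j = 0 := Finset.sum_eq_zero (fun j _ => le_antisymm (hall j) (hppos j))
    rw [hpsum] at this; linarith
  have hmk : m ≠ k := fun h => by rw [← h] at hk; exact hk.ne' hpm0
  set A : ℝ := w k * U' k (p k / 2) with hA
  -- choose ε
  have hev : ∀ᶠ x in nhdsWithin 0 (Set.Ioi (0:ℝ)),
      (2 * (A + 1) / w m ≤ U' m x ∧ x < p k / 2) ∧ 0 < x := by
    refine (Filter.Eventually.and ?_ ?_).and ?_
    · exact (hU m).2.2.2.2.2.eventually_ge_atTop _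
    · exact eventually_nhdsWithin_of_eventually_nhds
        (Filter.Tendsto.eventually_lt_const (by positivity) Filter.tendsto_id)
    · exact eventually_mem_nhdsWithin
  obtain ⟨ε, ⟨⟨hB, hεk⟩, hε⟩⟩ := hev.exists
  -- feasible perturbation
  set q : Fin M → ℝ := fun j => if j = m then ε else if j = k then p k - ε else p j with hq
  have hqm : q m = ε := by simp [hq]
  have hqk : q k = p k - ε := by simp [hq, hmk.symm]
  have hqo : ∀ j, j ≠ m → j ≠ k → q j = p j := by intro j h1 h2; simp [hq, h1, h2]
  have hqpos : ∀ j, 0 ≤ q j := by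
    intro j
    rcases eq_or_ne j m with rfl | h1
    · rw [hqm]; exact hε.le
    rcases eq_or_ne j k with rfl | h2
    · rw [hqk]; linarith
    · rw [hqo j h1 h2]; exact hppos j
  have hqsum : ∑ j, q j = c := by
    rw [sum_pair_diff hmk q p hqo, hpsum, hqm, hqk, hpm0]; ring
  have hobj := hpopt q hqpos hqsum
  rw [sum_pair_diff hmk (fun j => w j * U j (q j)) (fun j => w j * U j (p j))
    (fun j h1 h2 => by show w j * U j (q j) = w j * U j (p j); rw [hqo j h1 h2])] at hobj
  simp only [hqm, hqk, hpm0] at hobj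
  -- gain bound
  have hgain : (A + 1) * ε < w m * U m ε - w m * U m 0 := by
    have h1 : U' m ε * (ε - ε / 2) < U m ε - U m (ε / 2) :=
      SA.lt_slope (hU m) (by positivity) (by linarith)
    have h2 : U m 0 ≤ U m (ε / 2) := hU0 m _ (by positivity)
    have h3 : 2 * (A + 1) / w m * (ε - ε / 2) ≤ U' m ε * (ε - ε / 2) :=
      mul_le_mul_of_nonneg_right hB (by linarith)
    have h4 : 2 * (A + 1) / w m * (ε - ε / 2) = (A + 1) * ε / w m := by ring
    have h5 : (A + 1) * ε / w m < U m ε - U m 0 := by rw [← h4]; linarith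
    calc (A + 1) * ε = w m * ((A + 1) * ε / w m) := by field_simp
      _ < w m * (U m ε - U m 0) := mul_lt_mul_of_pos_left h5 hwm
      _ = w m * U m ε - w m * U m 0 := by ring
  -- loss bound
  have hloss : w k * U k (p k) - w k * U k (p k - ε) ≤ A * ε := by
    have h1 : U k (p k) - U k (p k - ε) < U' k (p k - ε) * (p k - (p k - ε)) :=
      SA.slope_lt (hU k) (by linarith) (by linarith)
    have h2 : U' k (p k - ε) ≤ U' k (p k / 2) := by
      rcases lt_or_eq_of_le (by linarith : p k / 2 ≤ p k - ε) with h | h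
      · exact (SA.anti (hU k) (by linarith) h).le
      · rw [← h]
    have h3 : U k (p k) - U k (p k - ε) ≤ U' k (p k / 2) * ε := by nlinarith
    have hwk : 0 ≤ w k := hw.1 k
    calc w k * U k (p k) - w k * U k (p k - ε) = w k * (U k (p k) - U k (p k - ε)) := by ring
      _ ≤ w k * (U' k (p k / 2) * ε) := mul_le_mul_of_nonneg_left h3 hwk
      _ = A * ε := by rw [hA]; ring
  nlinarith
end

lemma claimB {M : ℕ} {U U' : Fin M → ℝ → ℝ}
    (hU : ∀ m, StandingAssumptions (U m) (U' m))
    {c : ℝ} {w : Fin M → ℝ}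
    {p : Fin M → ℝ}
    (hppos : ∀ m, 0 ≤ p m) (hpsum : ∑ m, p m = c)
    (hpopt : ∀ q : Fin M → ℝ, (∀ m, 0 ≤ q m) → (∑ m, q m = c) →
      ∑ m, w m * U m (q m) ≤ ∑ m, w m * U m (p m))
    {m k : Fin M} (hmk : m ≠ k) (hm : 0 < p m) (hk : 0 < p k) :
    w m * U' m (p m) = w k * U' k (p k) := by
  set f : ℝ → ℝ := fun t => w m * U m (p m + t) + w k * U k (p k - t) with hf
  have hd : HasDerivAt f (w m * U' m (p m) - w k * U' k (p k)) 0 := by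
    have h1 : HasDerivAt (fun t : ℝ => U m (p m + t)) (U' m (p m)) 0 := by
      have hc : HasDerivAt (fun t : ℝ => p m + t) 1 0 := (hasDerivAt_id 0).const_add (p m)
      have hu : HasDerivAt (U m) (U' m (p m)) ((fun t : ℝ => p m + t) 0) := by
        simpa using (hU m).2.2.1 (p m) hm
      simpa [Function.comp_def] using hu.comp 0 hc
    have h2 : HasDerivAt (fun t : ℝ => U k (p k - t)) (-U' k (p k)) 0 := by
      have hc : HasDerivAt (fun t : ℝ => p k - t) (-1) 0 := (hasDerivAt_id 0).const_sub (p k)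
      have hu : HasDerivAt (U k) (U' k (p k)) ((fun t : ℝ => p k - t) 0) := by
        simpa using (hU k).2.2.1 (p k) hk
      simpa [Function.comp_def] using hu.comp 0 hc
    have := (h1.const_mul (w m)).add (h2.const_mul (w k))
    exact this.congr_deriv (by ring)
  have hmax : IsLocalMax f 0 := by
    have hI : Set.Ioo (-(p m)) (p k) ∈ nhds (0:ℝ) :=
      Ioo_mem_nhds (by linarith) hk
    filter_upwards [hI] with t ht
    obtain ⟨ht1, ht2⟩ := ht
    set q : Fin M → ℝ := fun j => if j = m then p m + t else if j = k then p k - t else p j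
      with hq
    have hqm : q m = p m + t := by simp [hq]
    have hqk : q k = p k - t := by simp [hq, hmk.symm]
    have hqo : ∀ j, j ≠ m → j ≠ k → q j = p j := by intro j h1 h2; simp [hq, h1, h2]
    have hqpos : ∀ j, 0 ≤ q j := by
      intro j
      rcases eq_or_ne j m with rfl | h1
      · rw [hqm]; linarith
      rcases eq_or_ne j k with rfl | h2
      · rw [hqk]; linarith
      · rw [hqo j h1 h2]; exact hppos j
    have hqsum : ∑ j, q j = c := by
      rw [sum_pair_diff hmk q p hqo, hpsum, hqm, hqk]; ring
    have hobj := hpopt q hqpos hqsum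
    rw [sum_pair_diff hmk (fun j => w j * U j (q j)) (fun j => w j * U j (p j))
      (fun j h1 h2 => by show w j * U j (q j) = w j * U j (p j); rw [hqo j h1 h2])] at hobj
    simp only [hqm, hqk] at hobj
    show f t ≤ f 0
    simp only [hf, add_zero, sub_zero]
    linarith
  have := hmax.hasDerivAt_eq_zero hd
  linarith

/-- For fixed `c > 0`, if `w₁ ≠ w₂` are distinct points of the simplex
and `p₁, p₂` are the corresponding optimal allocations of `c` (with `pᵢ^m = 0`
whenever `wᵢ^m = 0`), then `p₁ ≠ p₂` (they are distinct vectors in `c·Σ^M`). -/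
theorem optimal_allocation_injective_in_weights
    (M : ℕ) (U U' : Fin M → ℝ → ℝ)
    (hU : ∀ m, StandingAssumptions (U m) (U' m))
    (hU0 : ∀ m, ∀ c : ℝ, 0 < c → U m 0 ≤ U m c)
    (c : ℝ) (hc : 0 < c)
    (w₁ w₂ : Fin M → ℝ)
    (hw₁ : w₁ ∈ stdSimplex ℝ (Fin M)) (hw₂ : w₂ ∈ stdSimplex ℝ (Fin M))
    (hne : w₁ ≠ w₂)
    (p₁ p₂ : Fin M → ℝ)
    (hp₁pos : ∀ m, 0 ≤ p₁ m) (hp₁sum : ∑ m, p₁ m = c)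
    (hp₁zero : ∀ m, w₁ m = 0 → p₁ m = 0)
    (hp₁opt : ∀ q : Fin M → ℝ, (∀ m, 0 ≤ q m) → (∑ m, q m = c) →
      ∑ m, w₁ m * U m (q m) ≤ ∑ m, w₁ m * U m (p₁ m))
    (hp₂pos : ∀ m, 0 ≤ p₂ m) (hp₂sum : ∑ m, p₂ m = c)
    (hp₂zero : ∀ m, w₂ m = 0 → p₂ m = 0)
    (hp₂opt : ∀ q : Fin M → ℝ, (∀ m, 0 ≤ q m) → (∑ m, q m = c) →
      ∑ m, w₂ m * U m (q m) ≤ ∑ m, w₂ m * U m (p₂ m)) :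
    p₁ ≠ p₂ := by
  intro heq
  subst heq
  apply hne
  -- positivity of p vs positivity of weights
  have hiff₁ : ∀ m, 0 < p₁ m ↔ 0 < w₁ m := by
    intro m
    constructor
    · intro h
      rcases (hw₁.1 m).lt_or_eq with h' | h'
      · exact h'
      · exact absurd (hp₁zero m h'.symm) h.ne'
    · intro h; exact claimA hU hU0 hc hw₁ hp₁pos hp₁sum hp₁opt h
  have hiff₂ : ∀ m, 0 < p₁ m ↔ 0 < w₂ m := by
    intro m
    constructor
    · intro h
      rcases (hw₂.1 m).lt_or_eq with h' | h'
      · exact h'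
      · exact absurd (hp₂zero m h'.symm) h.ne'
    · intro h; exact claimA hU hU0 hc hw₂ hp₂pos hp₂sum hp₂opt h
  obtain ⟨k₀, hk₀⟩ : ∃ k, 0 < p₁ k := by
    by_contra hall
    push_neg at hall
    have : ∑ j, p₁ j = 0 := Finset.sum_eq_zero (fun j _ => le_antisymm (hall j) (hp₁pos j))
    rw [hp₁sum] at this; linarith
  set S : Finset (Fin M) := Finset.univ.filter (fun m => 0 < p₁ m) with hS
  set lam₁ : ℝ := w₁ k₀ * U' k₀ (p₁ k₀) with hlam₁
  set lam₂ : ℝ := w₂ k₀ * U' k₀ (p₁ k₀) with hlam₂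
  have hUpos : ∀ m ∈ S, 0 < U' m (p₁ m) := by
    intro m hm
    exact SA.pos (hU m) (by simpa [hS] using hm)
  have hval₁ : ∀ m ∈ S, w₁ m = lam₁ * (U' m (p₁ m))⁻¹ := by
    intro m hm
    have hpm : 0 < p₁ m := by simpa [hS] using hm
    have hUm := hUpos m hm
    rcases eq_or_ne m k₀ with rfl | hne'
    · field_simp [hlam₁]; rw [hlam₁]
    · have := claimB hU hp₁pos hp₁sum hp₁opt hne' hpm hk₀
      rw [hlam₁, ← this]; field_simp
  have hval₂ : ∀ m ∈ S, w₂ m = lam₂ * (U' m (p₁ m))⁻¹ := by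
    intro m hm
    have hpm : 0 < p₁ m := by simpa [hS] using hm
    have hUm := hUpos m hm
    rcases eq_or_ne m k₀ with rfl | hne'
    · field_simp [hlam₂]; rw [hlam₂]
    · have := claimB hU hp₂pos hp₂sum hp₂opt hne' hpm hk₀
      rw [hlam₂, ← this]; field_simp
  set T : ℝ := ∑ m ∈ S, (U' m (p₁ m))⁻¹ with hT
  have hsum₁ : lam₁ * T = 1 := by
    have h1 : ∑ m ∈ S, w₁ m = 1 := by
      rw [Finset.sum_subset (Finset.subset_univ S) ?_]
      · exact hw₁.2
      · intro j _ hj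
        simp only [hS, Finset.mem_filter, Finset.mem_univ, true_and, not_lt] at hj
        by_contra h
        have : 0 < w₁ j := (hw₁.1 j).lt_of_ne (Ne.symm h)
        exact absurd ((hiff₁ j).mpr this) (not_lt.mpr hj)
    rw [hT, Finset.mul_sum, ← h1]
    exact Finset.sum_congr rfl (fun m hm => (hval₁ m hm).symm)
  have hsum₂ : lam₂ * T = 1 := by
    have h1 : ∑ m ∈ S, w₂ m = 1 := by
      rw [Finset.sum_subset (Finset.subset_univ S) ?_]
      · exact hw₂.2
      · intro j _ hj
        simp only [hS, Finset.mem_filter, Finset.mem_univ, true_and, not_lt] at hj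
        by_contra h
        have : 0 < w₂ j := (hw₂.1 j).lt_of_ne (Ne.symm h)
        exact absurd ((hiff₂ j).mpr this) (not_lt.mpr hj)
    rw [hT, Finset.mul_sum, ← h1]
    exact Finset.sum_congr rfl (fun m hm => (hval₂ m hm).symm)
  have hT0 : T ≠ 0 := by
    intro h; rw [h, mul_zero] at hsum₁; exact one_ne_zero hsum₁.symm
  have hlam : lam₁ = lam₂ := by
    have := hsum₁.trans hsum₂.symm
    exact mul_right_cancel₀ hT0 this
  funext m
  by_cases hm : m ∈ S
  · rw [hval₁ m hm, hval₂ m hm, hlam]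
  · have hpm : ¬ 0 < p₁ m := by simpa [hS] using hm
    have h1 : w₁ m = 0 := by
      by_contra h
      exact hpm ((hiff₁ m).mpr ((hw₁.1 m).lt_of_ne (Ne.symm h)))
    have h2 : w₂ m = 0 := by
      by_contra h
      exact hpm ((hiff₂ m).mpr ((hw₂.1 m).lt_of_ne (Ne.symm h)))
    rw [h1, h2]
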